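/- For each a ∈ ℂ^d, the operator (T_a f)(z) = e^{-|a|²/2} e^{-\overline{a}·z} f(z+a) maps the Bargmann–Fock space A^{p,q}(ℂ^d) isometrically onto itself, for any 1 < p, q < ∞. -/

import Mathlib

open MeasureTheory

/-- The weighted translation `(T_a f)(z) = e^{-|a|²/2} e^{-ā·z} f(z+a)`. -/
noncomputable def fockT {d : ℕ} (a : Fin d → ℂ) (f : (Fin d → ℂ) → ℂ) : (Fin d → ℂ) → ℂ :=
  fun z => Complex.exp (-((∑ j, Complex.normSq (a j) : ℝ) : ℂ) / 2) *
    Complex.exp (-∑ j, (starRingEnd ℂ) (a j) * z j) * f (z + a)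

/-- The mixed-norm Fock integral
`∫_y (∫_x |f(x+iy)|^p e^{-p|x+iy|²/2} dx)^{q/p} dy` (valued in `ℝ≥0∞`). -/
noncomputable def fockInt {d : ℕ} (p q : ℝ) (f : (Fin d → ℂ) → ℂ) : ENNReal :=
  ∫⁻ y : Fin d → ℝ,
    (∫⁻ x : Fin d → ℝ, ENNReal.ofReal
      (‖f (fun j => (x j : ℂ) + (y j : ℂ) * Complex.I)‖ ^ p *
        Real.exp (-p * (∑ j, ((x j) ^ 2 + (y j) ^ 2)) / 2))) ^ (q / p)

/-- Membership in the Bargmann–Fock space `A^{p,q}(ℂ^d)`: entire with finite mixed norm. -/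
def memFock {d : ℕ} (p q : ℝ) (f : (Fin d → ℂ) → ℂ) : Prop :=
  Differentiable ℂ f ∧ fockInt p q f < ⊤

/-- The integrand of the inner integral, as a function of `x, y`. -/
noncomputable def fockIntegrand {d : ℕ} (p : ℝ) (f : (Fin d → ℂ) → ℂ)
    (x y : Fin d → ℝ) : ENNReal :=
  ENNReal.ofReal
    (‖f (fun j => (x j : ℂ) + (y j : ℂ) * Complex.I)‖ ^ p *
      Real.exp (-p * (∑ j, ((x j) ^ 2 + (y j) ^ 2)) / 2))

lemma fockInt_eq {d : ℕ} (p q : ℝ) (f : (Fin d → ℂ) → ℂ) :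
    fockInt p q f = ∫⁻ y, (∫⁻ x, fockIntegrand p f x y) ^ (q / p) := rfl

/-- Differentiability of `fockT a f`. -/
lemma fockT_differentiable {d : ℕ} (a : Fin d → ℂ) (f : (Fin d → ℂ) → ℂ)
    (hf : Differentiable ℂ f) : Differentiable ℂ (fockT a f) := by
  apply Differentiable.mul
  · apply Differentiable.mul (differentiable_const _)
    apply Differentiable.cexp
    apply Differentiable.neg
    apply Differentiable.fun_sum
    intro j _
    exact (differentiable_const _).mul (differentiable_pi.mp differentiable_id j)
  · exact hf.comp (differentiable_id.add_const a)

/-- `fockT a` is inverted by `fockT (-a)`. -/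
lemma fockT_neg_cancel {d : ℕ} (a : Fin d → ℂ) (g : (Fin d → ℂ) → ℂ) :
    fockT a (fockT (-a) g) = g := by
  funext z
  have hz : z + a + -a = z := add_neg_cancel_right z a
  simp only [fockT, Pi.neg_apply, Complex.normSq_neg, map_neg, neg_mul,
    Finset.sum_neg_distrib, neg_neg, hz]
  have hsum : ∑ j, (starRingEnd ℂ) (a j) * (z + a) j
      = (∑ j, (starRingEnd ℂ) (a j) * z j) + ((∑ j, Complex.normSq (a j) : ℝ) : ℂ) := by
    push_cast
    rw [← Finset.sum_add_distrib]
    refine Finset.sum_congr rfl fun j _ => ?_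
    simp only [Pi.add_apply, mul_add]
    rw [mul_comm ((starRingEnd ℂ) (a j)) (a j), Complex.mul_conj]
  rw [hsum]
  have e1 : ∀ A B C D : ℂ, Complex.exp A * Complex.exp B *
      (Complex.exp C * Complex.exp D * g z) = Complex.exp (A + B + C + D) * g z := by
    intro A B C D
    rw [Complex.exp_add, Complex.exp_add, Complex.exp_add]; ring
  rw [e1, show -(((∑ j, Complex.normSq (a j) : ℝ) : ℂ)) / 2 +
      -∑ j, (starRingEnd ℂ) (a j) * z j +
      -(((∑ j, Complex.normSq (a j) : ℝ) : ℂ)) / 2 +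
      ((∑ j, (starRingEnd ℂ) (a j) * z j) + ((∑ j, Complex.normSq (a j) : ℝ) : ℂ)) = 0
    from by ring, Complex.exp_zero, one_mul]

/-- The key pointwise identity: the weighted modulus of `fockT a f` at `x + iy`
equals that of `f` at the translated point. -/
lemma fockIntegrand_fockT {d : ℕ} (p : ℝ) (a : Fin d → ℂ) (f : (Fin d → ℂ) → ℂ)
    (x y : Fin d → ℝ) :
    fockIntegrand p (fockT a f) x y
      = fockIntegrand p f (x + fun j => (a j).re) (y + fun j => (a j).im) := by
  unfold fockIntegrand fockT
  congr 1
  have harg : ((fun j => (x j : ℂ) + (y j : ℂ) * Complex.I) + a)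
      = fun j => (((x + fun j => (a j).re) j : ℝ) : ℂ) +
          (((y + fun j => (a j).im) j : ℝ) : ℂ) * Complex.I := by
    funext j
    simp only [Pi.add_apply]
    apply Complex.ext <;> simp
  rw [harg]
  set A : ℝ := ‖f (fun j => (((x + fun j => (a j).re) j : ℝ) : ℂ) +
      (((y + fun j => (a j).im) j : ℝ) : ℂ) * Complex.I)‖ with hA
  have hnorm : ‖Complex.exp (-((∑ j, Complex.normSq (a j) : ℝ) : ℂ) / 2) *
      Complex.exp (-∑ j, (starRingEnd ℂ) (a j) * ((x j : ℂ) + (y j : ℂ) * Complex.I)) *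
      f ((fun j => (((x + fun j => (a j).re) j : ℝ) : ℂ) +
          (((y + fun j => (a j).im) j : ℝ) : ℂ) * Complex.I))‖
      = Real.exp (-(∑ j, Complex.normSq (a j)) / 2) *
        Real.exp (-∑ j, ((a j).re * x j + (a j).im * y j)) * A := by
    have hre1 : (-((∑ j, Complex.normSq (a j) : ℝ) : ℂ) / 2).re
        = -(∑ j, Complex.normSq (a j)) / 2 := by simp
    have hre2 : (-∑ j, (starRingEnd ℂ) (a j) * ((x j : ℂ) + (y j : ℂ) * Complex.I)).re
        = -∑ j, ((a j).re * x j + (a j).im * y j) := by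
      simp only [Complex.neg_re, Complex.re_sum, neg_inj]
      refine Finset.sum_congr rfl fun j _ => ?_
      simp [Complex.mul_re]
    rw [norm_mul, norm_mul,
      Complex.norm_exp, Complex.norm_exp, hre1, hre2, ← hA]
  rw [hnorm]
  have hA0 : 0 ≤ A := norm_nonneg _
  rw [Real.mul_rpow (by positivity) hA0, Real.mul_rpow (Real.exp_nonneg _) (Real.exp_nonneg _),
    ← Real.exp_mul, ← Real.exp_mul]
  rw [mul_comm _ (A ^ p), mul_assoc, mul_assoc, ← Real.exp_add, ← Real.exp_add]
  congr 2
  have hsum : ∑ j, (((x + fun j => (a j).re) j) ^ 2 + ((y + fun j => (a j).im) j) ^ 2)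
      = (∑ j, (x j ^ 2 + y j ^ 2)) + ((∑ j, Complex.normSq (a j))
          + 2 * ∑ j, ((a j).re * x j + (a j).im * y j)) := by
    rw [Finset.mul_sum, ← Finset.sum_add_distrib, ← Finset.sum_add_distrib]
    refine Finset.sum_congr rfl fun j _ => ?_
    simp only [Pi.add_apply, Complex.normSq_apply]
    ring
  rw [hsum]
  ring

/-- `fockT a` preserves the mixed-norm Fock integral. -/
lemma fockInt_fockT {d : ℕ} (p q : ℝ) (a : Fin d → ℂ) (f : (Fin d → ℂ) → ℂ) :
    fockInt p q (fockT a f) = fockInt p q f := by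
  rw [fockInt_eq, fockInt_eq]
  have h1 : ∀ y : Fin d → ℝ, (∫⁻ x, fockIntegrand p (fockT a f) x y)
      = ∫⁻ x, fockIntegrand p f x (y + fun j => (a j).im) := by
    intro y
    rw [show (∫⁻ x, fockIntegrand p (fockT a f) x y)
        = ∫⁻ x, fockIntegrand p f (x + fun j => (a j).re) (y + fun j => (a j).im) from
      lintegral_congr fun x => fockIntegrand_fockT p a f x y]
    exact lintegral_add_right_eq_self
      (fun x => fockIntegrand p f x (y + fun j => (a j).im)) _
  calc ∫⁻ y, (∫⁻ x, fockIntegrand p (fockT a f) x y) ^ (q / p)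
      = ∫⁻ y, (∫⁻ x, fockIntegrand p f x (y + fun j => (a j).im)) ^ (q / p) := by
        exact lintegral_congr fun y => by rw [h1 y]
    _ = ∫⁻ y, (∫⁻ x, fockIntegrand p f x y) ^ (q / p) :=
        lintegral_add_right_eq_self
          (fun y => (∫⁻ x, fockIntegrand p f x y) ^ (q / p)) _

/-- For `1 < p, q < ∞`, `T_a` is an isometry of `A^{p,q}(ℂ^d)` onto itself. -/
theorem fockT_isometry_onto {d : ℕ} (p q : ℝ) (hp : 1 < p) (hq : 1 < q) (a : Fin d → ℂ) :
    (∀ f : (Fin d → ℂ) → ℂ, memFock p q f →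
      memFock p q (fockT a f) ∧ fockInt p q (fockT a f) = fockInt p q f) ∧
    (∀ g : (Fin d → ℂ) → ℂ, memFock p q g →
      ∃ f : (Fin d → ℂ) → ℂ, memFock p q f ∧ fockT a f = g) := by
  constructor
  · intro f hf
    refine ⟨⟨fockT_differentiable a f hf.1, ?_⟩, fockInt_fockT p q a f⟩
    rw [fockInt_fockT p q a f]
    exact hf.2
  · intro g hg
    refine ⟨fockT (-a) g, ⟨fockT_differentiable (-a) g hg.1, ?_⟩, fockT_neg_cancel a g⟩
    rw [fockInt_fockT p q (-a) g]
    exact hg.2
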